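/- For each of the two choices V = H¹(0,1) and V = H¹_{(0}(0,1) the following holds: for every κ ∈ ℂ_{≥0} with κ ≠ 0 and every u ∈ V with u ≠ 0, there exists v ∈ V with v ≠ 0 (one may take v = (κ/|κ|)·u) such that Re a¹ᴰ_κ(u,v) ≥ (Re κ/|κ|) · ‖u‖_{1,|κ|} · ‖v‖_{1,|κ|}; that is, the inf-sup constant of a¹ᴰ_κ with respect to the norm ‖·‖_{1,|κ|} is at least Re κ/|κ|. -/

import Mathlib

open MeasureTheory

/-- A function in `H¹(0,L)`: a pair `(toFun, deriv)` where `toFun` is continuous on `[0,L]`,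
`deriv` is square-integrable on `(0,L)`, and `toFun x = toFun 0 + ∫₀ˣ deriv` on `[0,L]`. -/
structure H1 (L : ℝ) where
  toFun : ℝ → ℂ
  deriv : ℝ → ℂ
  continuousOn : ContinuousOn toFun (Set.Icc 0 L)
  memLp_deriv : MemLp deriv 2 (volume.restrict (Set.Ioo 0 L))
  eq_intderiv : ∀ x ∈ Set.Icc 0 L, toFun x = toFun 0 + ∫ t in (0:ℝ)..x, deriv t

/-- The sesquilinear form
`a¹ᴰ_κ(u,v) = ∫₀ᴸ u' conj(v') + κ² ∫₀ᴸ u conj(v) + κ u(L) conj(v(L))`. -/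
noncomputable def a1D (L : ℝ) (κ : ℂ) (u v : H1 L) : ℂ :=
  (∫ t in Set.Ioo (0:ℝ) L, u.deriv t * star (v.deriv t)) +
    κ ^ 2 * (∫ t in Set.Ioo (0:ℝ) L, u.toFun t * star (v.toFun t)) +
    κ * u.toFun L * star (v.toFun L)

/-- The weighted `H¹` norm `‖u‖²_{1,s} = ‖u'‖²_{L²(0,L)} + s² ‖u‖²_{L²(0,L)}`. -/
noncomputable def h1Norm (L : ℝ) (s : ℝ) (u : H1 L) : ℝ :=
  Real.sqrt ((∫ t in Set.Ioo (0:ℝ) L, ‖u.deriv t‖ ^ 2) +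
    s ^ 2 * ∫ t in Set.Ioo (0:ℝ) L, ‖u.toFun t‖ ^ 2)

/-- The `L²(0,L)` norm. -/
noncomputable def l2Norm (L : ℝ) (f : ℝ → ℂ) : ℝ :=
  Real.sqrt (∫ t in Set.Ioo (0:ℝ) L, ‖f t‖ ^ 2)


lemma int_mul_star_const_mul (S : Set ℝ) (c : ℂ) (f : ℝ → ℂ) :
    ∫ t in S, f t * star (c * f t)
      = star c * ((∫ t in S, ‖f t‖ ^ 2 : ℝ) : ℂ) := by
  have h : ∀ t, f t * star (c * f t) = star c * ((‖f t‖ ^ 2 : ℝ) : ℂ) := by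
    intro t
    rw [star_mul', mul_left_comm]
    congr 1
    rw [Complex.star_def, Complex.mul_conj]
    simp [Complex.normSq_eq_norm_sq]
  simp only [h, integral_const_mul]
  congr 1
  exact integral_ofReal

set_option maxHeartbeats 1000000 in
/-- For `V = H¹(0,1)` (`zeroBC = false`) or `V = H¹_{(0}(0,1)`
(`zeroBC = true`), every `κ ∈ ℂ_{≥0} \ {0}` and every `u ∈ V`, `u ≠ 0`, there exists
`v ∈ V`, `v ≠ 0`, with `Re a¹ᴰ_κ(u,v) ≥ (Re κ / |κ|) ‖u‖_{1,|κ|} ‖v‖_{1,|κ|}`;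
i.e. the inf-sup constant of `a¹ᴰ_κ` is at least `Re κ / |κ|`. -/
theorem infSup_a1D_re_div_abs (zeroBC : Bool) (κ : ℂ) (hre : 0 ≤ κ.re) (hκ : κ ≠ 0)
    (u : H1 1) (hu0 : zeroBC = true → u.toFun 0 = 0)
    (hu : ∃ x ∈ Set.Icc (0:ℝ) 1, u.toFun x ≠ 0) :
    ∃ v : H1 1, (zeroBC = true → v.toFun 0 = 0) ∧
      (∃ x ∈ Set.Icc (0:ℝ) 1, v.toFun x ≠ 0) ∧
      (κ.re / ‖κ‖) *
          (h1Norm 1 (‖κ‖) u * h1Norm 1 (‖κ‖) v)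
        ≤ (a1D 1 κ u v).re := by
  set s : ℝ := ‖κ‖ with hsdef
  have hs0 : 0 < s := norm_pos_iff.mpr hκ
  set c : ℂ := κ / s with hcdef
  have hsne : (s : ℂ) ≠ 0 := Complex.ofReal_ne_zero.mpr hs0.ne'
  have hcne : c ≠ 0 := div_ne_zero hκ hsne
  set v : H1 1 := ⟨fun t => c * u.toFun t, fun t => c * u.deriv t,
      continuousOn_const.mul u.continuousOn,
      u.memLp_deriv.const_mul c, by
        intro x hx
        rw [intervalIntegral.integral_const_mul, u.eq_intderiv x hx]
        ring⟩ with hv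
  have hvf : ∀ t, v.toFun t = c * u.toFun t := fun t => rfl
  have hvd : ∀ t, v.deriv t = c * u.deriv t := fun t => rfl
  refine ⟨v, ?_, ?_, ?_⟩
  · intro h
    rw [hvf, hu0 h, mul_zero]
  · obtain ⟨x, hx, hxne⟩ := hu
    exact ⟨x, hx, by rw [hvf]; exact mul_ne_zero hcne hxne⟩
  set A : ℝ := ∫ t in Set.Ioo (0:ℝ) 1, ‖u.deriv t‖ ^ 2 with hA
  set B : ℝ := ∫ t in Set.Ioo (0:ℝ) 1, ‖u.toFun t‖ ^ 2 with hB
  set C : ℝ := ‖u.toFun 1‖ ^ 2 with hC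
  have hA0 : 0 ≤ A := setIntegral_nonneg measurableSet_Ioo (fun t _ => by positivity)
  have hB0 : 0 ≤ B := setIntegral_nonneg measurableSet_Ioo (fun t _ => by positivity)
  have hC0 : 0 ≤ C := by rw [hC]; positivity
  have habsc : ‖c‖ = 1 := by
    rw [hcdef, norm_div]
    simp [Complex.norm_real, abs_of_pos hs0, ← hsdef, div_self hs0.ne']
  have hnormc : ∀ z : ℂ, ‖c * z‖ = ‖z‖ := by
    intro z
    simp [norm_mul, habsc]
  have hnu : h1Norm 1 s u = Real.sqrt (A + s ^ 2 * B) := by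
    simp only [h1Norm, ← hA, ← hB]
  have hnv : h1Norm 1 s v = Real.sqrt (A + s ^ 2 * B) := by
    simp only [h1Norm, hvf, hvd, hnormc, ← hA, ← hB]
  have hmc : κ * star c = (s : ℂ) := by
    have h1 : κ * star c = (κ * (starRingEnd ℂ) κ) / (s : ℂ) := by
      rw [hcdef, star_div₀, Complex.star_def, Complex.conj_ofReal]
      ring
    rw [h1, Complex.mul_conj, Complex.normSq_eq_norm_sq, ← hsdef]
    push_cast
    rw [sq, mul_div_assoc, div_self hsne, mul_one]
  have ha : a1D 1 κ u v = star c * (A : ℂ) + κ * (s : ℂ) * (B : ℂ) + (s : ℂ) * (C : ℂ) := by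
    have e1 : (∫ t in Set.Ioo (0:ℝ) 1, u.deriv t * star (v.deriv t))
        = star c * (A : ℂ) := by
      simp only [hvd]
      exact int_mul_star_const_mul _ c u.deriv
    have e2 : (∫ t in Set.Ioo (0:ℝ) 1, u.toFun t * star (v.toFun t))
        = star c * (B : ℂ) := by
      simp only [hvf]
      exact int_mul_star_const_mul _ c u.toFun
    have e3 : κ * u.toFun 1 * star (v.toFun 1) = (s : ℂ) * (C : ℂ) := by
      rw [hvf, star_mul']
      have h4 : κ * u.toFun 1 * (star c * star (u.toFun 1))
          = (κ * star c) * (u.toFun 1 * star (u.toFun 1)) := by ring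
      rw [h4, hmc, Complex.star_def, Complex.mul_conj, hC]
      norm_cast
      simp [Complex.normSq_eq_norm_sq]
    rw [a1D, e1, e2, e3]
    have h2 : κ ^ 2 * (star c * (B : ℂ)) = κ * (s : ℂ) * (B : ℂ) := by
      have h5 : κ ^ 2 * (star c * (B : ℂ)) = κ * (κ * star c) * (B : ℂ) := by ring
      rw [h5, hmc]
    rw [h2]
  rw [hnu, hnv, ha]
  have hre_sc : (star c).re = κ.re / s := by
    rw [hcdef, star_div₀, Complex.star_def, Complex.conj_ofReal, Complex.div_ofReal_re,
      Complex.conj_re]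
  have hre_tot : (star c * (A : ℂ) + κ * (s : ℂ) * (B : ℂ) + (s : ℂ) * (C : ℂ)).re
      = (κ.re / s) * A + (κ.re * s) * B + s * C := by
    simp only [Complex.add_re, Complex.mul_re, Complex.ofReal_re, Complex.ofReal_im,
      mul_zero, zero_mul, sub_zero, hre_sc]
  rw [hre_tot]
  have hsq : Real.sqrt (A + s ^ 2 * B) * Real.sqrt (A + s ^ 2 * B) = A + s ^ 2 * B :=
    Real.mul_self_sqrt (add_nonneg hA0 (mul_nonneg (sq_nonneg s) hB0))
  rw [hsq]
  have key : κ.re / s * (A + s ^ 2 * B) = κ.re / s * A + κ.re * s * B := by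
    have hsne' : s ≠ 0 := hs0.ne'
    field_simp
  rw [key]
  nlinarith [mul_nonneg hs0.le hC0]
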